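/- Let φ assign to each tilting bundle T (in normal form T = ⊕_{i=1}^{p+q} [D^{a_i}_{b_i}] with 0 = a₁ < a₂ ≤ ⋯ ≤ a_{p+q} = 1 and b₁ ≤ ⋯ ≤ b_{p+q}) the tuple (c₁,…,c_p) where qc_i/q is the lower endpoint of the unique triangle containing the upper boundary segment [(i−1)/p, i/p]. Then φ is a bijection between triangulations of the parallelogram in the universal cover whose arcs are all positive bridging arcs and the set Λ⁰_{(p,q)} = {(c₁,…,c_p) ∈ ℤ^p : c₁ ≤ ⋯ ≤ c_p ≤ c₁ + q}. -/

import Mathlib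

/-- The set `Λ⁰_{(p,q)} = {(c₁,…,c_p) ∈ ℤ^p : c₁ ≤ ⋯ ≤ c_p ≤ c₁ + q}`. -/
def Lam0 (p q : ℕ) : Set (Fin p → ℤ) :=
  {c | (∀ i j : Fin p, i ≤ j → c i ≤ c j) ∧ ∀ i j : Fin p, c i ≤ c j + q}

/-- Quasi-periodic extension `ext(n) = c(n mod p) + q·⌊n/p⌋` of `c : Fin p → ℤ`. -/
def extSeq (p q : ℕ) (c : Fin p → ℤ) (n : ℤ) : ℤ :=
  (if h : (n.emod p).toNat < p then c ⟨(n.emod p).toNat, h⟩ else 0) + (q : ℤ) * n.ediv p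

/-- The set of positive bridging arcs (a pair `(t,b)` is the arc from the bottom marked
point `b/q` to the top marked point `t/p` in the universal cover) of the triangulation
encoded by `c`: the top segment `[t/p, (t+1)/p]` lies in the triangle with bottom apex
`ext(t)/q`, so the top point `t/p` is joined to exactly the bottom points `b/q` with
`ext(t−1) ≤ b ≤ ext(t)`. -/
def arcSet (p q : ℕ) (c : Fin p → ℤ) : Set (ℤ × ℤ) :=
  {x | extSeq p q c (x.1 - 1) ≤ x.2 ∧ x.2 ≤ extSeq p q c x.1}

/-- Periodicity under the deck transformation of the covering of the annulus. -/
def IsPeriodic (p q : ℕ) (S : Set (ℤ × ℤ)) : Prop :=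
  ∀ t b : ℤ, (t, b) ∈ S ↔ (t + p, b + q) ∈ S

/-- Two positive bridging arcs do not cross iff their endpoints are not interlaced. -/
def Noncrossing (S : Set (ℤ × ℤ)) : Prop :=
  ∀ x ∈ S, ∀ y ∈ S, x.1 < y.1 → x.2 ≤ y.2

/-- A triangulation of the (cover of the) annulus all of whose arcs are positive
bridging arcs: a maximal periodic pairwise-noncrossing set of bridging arcs. -/
def IsBridgingTriangulation (p q : ℕ) (S : Set (ℤ × ℤ)) : Prop :=
  IsPeriodic p q S ∧ Noncrossing S ∧
    ∀ T, S ⊆ T → IsPeriodic p q T → Noncrossing T → T = S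

namespace BTaux

variable {p q : ℕ} {c : Fin p → ℤ}

lemma emod_toNat_lt (hp : 1 ≤ p) (n : ℤ) : (n.emod p).toNat < p := by
  have h1 : (0:ℤ) < p := by exact_mod_cast hp
  have h2 : n % (p:ℤ) < p := Int.emod_lt_of_pos n h1
  have h3 : 0 ≤ n % (p:ℤ) := Int.emod_nonneg n (by omega : (p:ℤ) ≠ 0)
  have : n.emod (p:ℤ) = n % p := rfl
  omega

lemma extSeq_of_spec (hp : 1 ≤ p) (n k r : ℤ) (hr0 : 0 ≤ r) (hrp : r < p)
    (hn : n = (p:ℤ) * k + r) :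
    extSeq p q c n = c ⟨r.toNat, by omega⟩ + (q:ℤ) * k := by
  have hb : (0:ℤ) < p := by exact_mod_cast hp
  have hdm : n / (p:ℤ) = k ∧ n % (p:ℤ) = r :=
    (Int.ediv_emod_unique hb).2 ⟨by omega, hr0, hrp⟩
  have he : n.emod (p:ℤ) = r := hdm.2
  have hd : n.ediv (p:ℤ) = k := hdm.1
  rw [extSeq, dif_pos (emod_toNat_lt hp n), hd]
  congr 2
  apply Fin.ext
  simpa using congrArg Int.toNat he

/-- spec in reverse: every n has such a decomposition -/
lemma exists_spec (hp : 1 ≤ p) (n : ℤ) :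
    n = (p:ℤ) * (n.ediv p) + n.emod p ∧ 0 ≤ n.emod (p:ℤ) ∧ n.emod (p:ℤ) < p := by
  have h1 : (0:ℤ) < p := by exact_mod_cast hp
  refine ⟨(Int.mul_ediv_add_emod n p).symm, Int.emod_nonneg n (by omega), Int.emod_lt_of_pos n h1⟩

lemma extSeq_coe (hp : 1 ≤ p) (i : Fin p) : extSeq p q c (i : ℤ) = c i := by
  have := extSeq_of_spec (c := c) (q := q) hp (i : ℤ) 0 (i : ℤ) (by positivity)
    (by exact_mod_cast i.2) (by ring)
  rw [this]; simp

lemma extSeq_add_p (hp : 1 ≤ p) (n : ℤ) :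
    extSeq p q c (n + p) = extSeq p q c n + q := by
  obtain ⟨h1, h2, h3⟩ := exists_spec hp n
  rw [extSeq_of_spec hp n _ _ h2 h3 h1,
    extSeq_of_spec hp (n + p) (n.ediv p + 1) (n.emod p) h2 h3 (by linarith)]
  ring

lemma extSeq_succ (hp : 1 ≤ p) (hc : c ∈ Lam0 p q) (n : ℤ) :
    extSeq p q c n ≤ extSeq p q c (n + 1) := by
  obtain ⟨h1, h2, h3⟩ := exists_spec hp n
  rw [extSeq_of_spec hp n _ _ h2 h3 h1]
  rcases lt_or_eq_of_le (by omega : n.emod (p:ℤ) + 1 ≤ p) with h | h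
  · rw [extSeq_of_spec hp (n + 1) (n.ediv p) (n.emod p + 1) (by omega) h (by omega)]
    have := hc.1 ⟨(n.emod (p:ℤ)).toNat, by omega⟩ ⟨(n.emod (p:ℤ) + 1).toNat, by omega⟩
      (by rw [Fin.mk_le_mk]; omega)
    omega
  · rw [extSeq_of_spec hp (n + 1) (n.ediv p + 1) 0 le_rfl (by exact_mod_cast hp) (by rw [mul_add, mul_one]; omega)]
    have := hc.2 ⟨(n.emod (p:ℤ)).toNat, by omega⟩ ⟨0, by omega⟩
    simp only [Int.toNat_zero] at this ⊢
    have hq : ((q:ℤ)) * (n.ediv p + 1) = q * n.ediv p + q := by ring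
    omega

lemma extSeq_mono (hp : 1 ≤ p) (hc : c ∈ Lam0 p q) {m n : ℤ} (h : m ≤ n) :
    extSeq p q c m ≤ extSeq p q c n := by
  exact Int.le_induction (motive := fun n _ => extSeq p q c m ≤ extSeq p q c n) (le_refl _) (fun n _ ih => le_trans ih (extSeq_succ hp hc n)) n h


lemma mem_arcSet {t b : ℤ} :
    (t, b) ∈ arcSet p q c ↔ extSeq p q c (t - 1) ≤ b ∧ b ≤ extSeq p q c t := Iff.rfl

lemma arcSet_periodic (hp : 1 ≤ p) : IsPeriodic p q (arcSet p q c) := by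
  intro t b
  have h1 : extSeq p q c (t + (p:ℤ) - 1) = extSeq p q c (t - 1) + q := by
    rw [show t + (p:ℤ) - 1 = (t - 1) + p by ring, extSeq_add_p hp]
  have h2 : extSeq p q c (t + (p:ℤ)) = extSeq p q c t + q := extSeq_add_p hp t
  simp only [mem_arcSet, h1, h2]
  omega

lemma arcSet_noncrossing (hp : 1 ≤ p) (hc : c ∈ Lam0 p q) : Noncrossing (arcSet p q c) := by
  rintro ⟨t, b⟩ ⟨_, h2⟩ ⟨t', b'⟩ ⟨h1', _⟩ hlt
  simp only at *
  exact le_trans h2 (le_trans (extSeq_mono hp hc (by omega : t ≤ t' - 1)) h1')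

lemma mem_arcSet_top (hp : 1 ≤ p) (hc : c ∈ Lam0 p q) (t : ℤ) :
    (t, extSeq p q c t) ∈ arcSet p q c :=
  ⟨extSeq_mono hp hc (by omega), le_refl _⟩

lemma mem_arcSet_bot (hp : 1 ≤ p) (hc : c ∈ Lam0 p q) (t : ℤ) :
    (t, extSeq p q c (t - 1)) ∈ arcSet p q c :=
  ⟨le_refl _, extSeq_mono hp hc (by omega)⟩

lemma arcSet_tri (hp : 1 ≤ p) (hc : c ∈ Lam0 p q) :
    IsBridgingTriangulation p q (arcSet p q c) := by
  refine ⟨arcSet_periodic hp, arcSet_noncrossing hp hc, ?_⟩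
  intro T hsub hper hnc
  apply Set.Subset.antisymm _ hsub
  rintro ⟨t, b⟩ hT
  have hA : ((t - 1 : ℤ), extSeq p q c (t - 1)) ∈ arcSet p q c := mem_arcSet_top hp hc _
  have hB : ((t + 1 : ℤ), extSeq p q c t) ∈ arcSet p q c := by
    have := mem_arcSet_bot hp hc (t + 1)
    rwa [show t + 1 - 1 = t by ring] at this
  have h1 := hnc _ (hsub hA) (t, b) hT (by show t - 1 < t; omega)
  have h2 := hnc (t, b) hT _ (hsub hB) (by show t < t + 1; omega)
  exact ⟨h1, h2⟩

lemma mem_congr {S : Set (ℤ × ℤ)} {u v u' v' : ℤ} (h : (u, v) ∈ S)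
    (h1 : u' = u) (h2 : v' = v) : (u', v') ∈ S := by subst h1; subst h2; exact h

lemma periodic_iterate {S : Set (ℤ × ℤ)} (hS : IsPeriodic p q S) (k t b : ℤ) :
    (t, b) ∈ S ↔ (t + p * k, b + q * k) ∈ S := by
  induction k using Int.induction_on with
  | zero => simp
  | succ n ih =>
      constructor
      · intro h
        exact mem_congr ((hS _ _).1 (ih.1 h)) (by push_cast; ring) (by push_cast; ring)
      · intro h
        exact ih.2 ((hS (t + p * n) (b + q * n)).2
          (mem_congr h (by push_cast; ring) (by push_cast; ring)))
  | pred n ih =>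
      constructor
      · intro h
        exact (hS _ _).2 (mem_congr (ih.1 h) (by push_cast; ring) (by push_cast; ring))
      · intro h
        exact ih.2 (mem_congr ((hS _ _).1 h) (by push_cast; ring) (by push_cast; ring))


lemma extend_mem {S : Set (ℤ × ℤ)} (hp : 1 ≤ p) (hq : 1 ≤ q)
    (hS : IsBridgingTriangulation p q S) (t b : ℤ)
    (hlow : ∀ u v : ℤ, (u, v) ∈ S → u < t → v ≤ b)
    (hhigh : ∀ u v : ℤ, (u, v) ∈ S → t < u → b ≤ v) :
    (t, b) ∈ S := by
  have hp' : (0:ℤ) < p := by exact_mod_cast hp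
  have hq' : (0:ℤ) ≤ q := by positivity
  set O : Set (ℤ × ℤ) := {x | ∃ k : ℤ, x.1 = t + p * k ∧ x.2 = b + q * k} with hO
  have hperO : IsPeriodic p q O := by
    intro u v
    constructor
    · rintro ⟨k, h1, h2⟩
      exact ⟨k + 1, by simp only at h1 ⊢; rw [h1]; ring,
        by simp only at h2 ⊢; rw [h2]; ring⟩
    · rintro ⟨k, h1, h2⟩
      simp only at h1 h2
      exact ⟨k - 1, by simp only; rw [mul_sub, mul_one]; omega,
        by simp only; rw [mul_sub, mul_one]; omega⟩
  have hperT : IsPeriodic p q (S ∪ O) := fun u v => by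
    rw [Set.mem_union, Set.mem_union, ← hS.1 u v, ← hperO u v]
  have hncT : Noncrossing (S ∪ O) := by
    intro x hx y hy hlt
    rcases hx with hx | ⟨k, hk1, hk2⟩ <;> rcases hy with hy | ⟨k', hk1', hk2'⟩
    · exact hS.2.1 x hx y hy hlt
    · -- x ∈ S, y in orbit
      have hxS : (x.1 + p * (-k'), x.2 + q * (-k')) ∈ S :=
        (periodic_iterate hS.1 (-k') x.1 x.2).1 (by rwa [Prod.mk.eta])
      have h1 := hlow _ _ hxS (by rw [hk1'] at hlt; linarith)
      linarith [hk2'.ge, hk2'.le]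
    · -- x in orbit, y ∈ S
      have hyS : (y.1 + p * (-k), y.2 + q * (-k)) ∈ S :=
        (periodic_iterate hS.1 (-k) y.1 y.2).1 (by rwa [Prod.mk.eta])
      have h1 := hhigh _ _ hyS (by rw [hk1] at hlt; linarith)
      linarith [hk2.ge, hk2.le]
    · -- both in orbit
      rw [hk1, hk1'] at hlt
      have hkk : k < k' := by nlinarith
      have : (q:ℤ) * k ≤ q * k' := mul_le_mul_of_nonneg_left hkk.le hq'
      rw [hk2, hk2']
      linarith
  have heq := hS.2.2 _ Set.subset_union_left hperT hncT
  have hmem : (t, b) ∈ S ∪ O := Or.inr ⟨0, by simp, by simp⟩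
  rw [heq] at hmem
  exact hmem

lemma exists_preimage (hp : 1 ≤ p) (hq : 1 ≤ q) {S : Set (ℤ × ℤ)}
    (hS : IsBridgingTriangulation p q S) :
    ∃ c ∈ Lam0 p q, arcSet p q c = S := by
  have hp' : (0:ℤ) < p := by exact_mod_cast hp
  have hq' : (0:ℤ) ≤ q := by positivity
  -- S is nonempty
  obtain ⟨⟨t0, b0⟩, ht0⟩ : S.Nonempty := by
    rcases Set.eq_empty_or_nonempty S with rfl | h
    · exfalso
      have hc0 : (fun _ => (0:ℤ)) ∈ Lam0 p q :=
        ⟨fun i j _ => le_rfl, fun i j => by positivity⟩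
      have heq := hS.2.2 (arcSet p q (fun _ => (0:ℤ))) (Set.empty_subset _)
        (arcSet_periodic hp) (arcSet_noncrossing hp hc0)
      have hm := mem_arcSet_top hp hc0 0
      rw [heq] at hm
      exact Set.notMem_empty _ hm
    · exact h
  -- every column is nonempty
  have fill : ∀ t : ℤ, ∃ b, (t, b) ∈ S := by
    intro t
    have hAne : ∃ v, ∃ u, u < t ∧ (u, v) ∈ S := by
      refine ⟨b0 + q * min (t - t0 - 1) (-1), t0 + p * min (t - t0 - 1) (-1), ?_,
        (periodic_iterate hS.1 _ t0 b0).1 ht0⟩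
      have hk : min (t - t0 - 1) (-1) ≤ -1 := min_le_right _ _
      have hk2 : min (t - t0 - 1) (-1) ≤ t - t0 - 1 := min_le_left _ _
      nlinarith
    have hAbdd : ∃ B, ∀ v, (∃ u, u < t ∧ (u, v) ∈ S) → v ≤ B := by
      refine ⟨b0 + q * max (t - t0) 0, ?_⟩
      rintro v ⟨u, hu, hv⟩
      have hmem : (t0 + p * max (t - t0) 0, b0 + q * max (t - t0) 0) ∈ S :=
        (periodic_iterate hS.1 _ t0 b0).1 ht0
      have hfirst : u < t0 + p * max (t - t0) 0 := by
        have h1 : (0:ℤ) ≤ max (t - t0) 0 := le_max_right _ _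
        have h2 : t - t0 ≤ max (t - t0) 0 := le_max_left _ _
        nlinarith
      exact hS.2.1 (u, v) hv _ hmem hfirst
    obtain ⟨m, ⟨u, hu, hum⟩, hmax⟩ := Int.exists_greatest_of_bdd hAbdd hAne
    refine ⟨m, extend_mem hp hq hS t m ?_ ?_⟩
    · intro u' v' h h'; exact hmax v' ⟨u', h', h⟩
    · intro u' v' h h'; exact hS.2.1 (u, m) hum (u', v') h (lt_trans hu h')
  -- greatest element of each column
  have colmax : ∀ t : ℤ, ∃ m, (t, m) ∈ S ∧ ∀ b, (t, b) ∈ S → b ≤ m := by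
    intro t
    obtain ⟨w, hw⟩ := fill (t + p)
    have hbdd : ∃ B, ∀ b, (t, b) ∈ S → b ≤ B :=
      ⟨w, fun b hb => hS.2.1 (t, b) hb (t + p, w) hw (by simp only; linarith)⟩
    obtain ⟨m, hm1, hm2⟩ := Int.exists_greatest_of_bdd hbdd (fill t)
    exact ⟨m, hm1, hm2⟩
  choose e he hemax using colmax
  have emono : ∀ {s t : ℤ}, s ≤ t → e s ≤ e t := by
    intro s t h
    rcases eq_or_lt_of_le h with rfl | h
    · exact le_rfl
    · exact hS.2.1 (s, e s) (he s) (t, e t) (he t) h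
  have eshift : ∀ t : ℤ, e (t + p) = e t + q := by
    intro t
    have h1 : (t + p, e t + q) ∈ S := (hS.1 t (e t)).1 (he t)
    have h2 : (t, e (t + p) - q) ∈ S := by
      apply (hS.1 t _).2
      have := he (t + p)
      rwa [show e (t + p) - q + q = e (t + p) by ring]
    have h3 := hemax _ _ h1
    have h4 := hemax _ _ h2
    omega
  have eiter : ∀ (k t : ℤ), e (t + p * k) = e t + q * k := by
    intro k t
    induction k using Int.induction_on with
    | zero => simp
    | succ n ih =>
        rw [show t + (p:ℤ) * ((n:ℤ) + 1) = (t + p * n) + p by ring, eshift, ih]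
        ring
    | pred n ih =>
        have h := eshift (t + p * (-(n:ℤ) - 1))
        rw [show t + (p:ℤ) * (-(n:ℤ) - 1) + p = t + p * (-(n:ℤ)) by ring, ih] at h
        linarith
  set c : Fin p → ℤ := fun i => e (i : ℤ) with hcdef
  have hcL : c ∈ Lam0 p q := by
    constructor
    · intro i j hij
      exact emono (by exact_mod_cast hij)
    · intro i j
      have hi : (i:ℤ) < p := by exact_mod_cast i.2
      have hj : (0:ℤ) ≤ (j:ℤ) := by positivity
      have h1 := emono (show (i:ℤ) ≤ (j:ℤ) + p by omega)
      have h2 : e ((j:ℤ) + p) = e (j:ℤ) + q := eshift (j:ℤ)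
      simp only [hcdef]
      omega
  have hext : ∀ t : ℤ, extSeq p q c t = e t := by
    intro t
    obtain ⟨h1, h2, h3⟩ := exists_spec hp t
    rw [extSeq_of_spec hp t _ _ h2 h3 h1]
    have h4 : (((t.emod p).toNat : ℤ)) = t.emod p := Int.toNat_of_nonneg h2
    have h5 := eiter (t.ediv p) (t.emod p)
    rw [show t.emod (p:ℤ) + (p:ℤ) * t.ediv p = t by omega] at h5
    simp only [hcdef, h4]
    omega
  refine ⟨c, hcL, ?_⟩
  ext ⟨t, b⟩
  rw [mem_arcSet, hext, hext]
  constructor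
  · rintro ⟨h1, h2⟩
    apply extend_mem hp hq hS
    · intro u v huv hu
      have hv : v ≤ e (t - 1) := by
        rcases eq_or_lt_of_le (show u ≤ t - 1 by omega) with rfl | h
        · exact hemax _ _ huv
        · exact hS.2.1 (u, v) huv (t - 1, e (t - 1)) (he (t - 1)) h
      omega
    · intro u v huv hu
      have := hS.2.1 (t, e t) (he t) (u, v) huv hu
      omega
  · intro hb
    refine ⟨hS.2.1 (t - 1, e (t - 1)) (he (t - 1)) (t, b) hb (by simp only; omega),
      hemax _ _ hb⟩

end BTaux

/-- `c ↦ arcSet c` (the inverse of reading off the apexes `cᵢ`) is a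
bijection between `Λ⁰_{(p,q)}` and the triangulations by positive bridging arcs. -/
theorem bijection_tilting_tuples (p q : ℕ) (hp : 1 ≤ p) (hq : 1 ≤ q) :
    Set.BijOn (arcSet p q) (Lam0 p q) {S | IsBridgingTriangulation p q S} := by
  refine ⟨fun c hc => BTaux.arcSet_tri hp hc, ?_, ?_⟩
  · intro c hc c' hc' h
    have key : ∀ t : ℤ, extSeq p q c t = extSeq p q c' t := by
      intro t
      have h1 : (t, extSeq p q c t) ∈ arcSet p q c' := h ▸ BTaux.mem_arcSet_top hp hc t
      have h2 : (t, extSeq p q c' t) ∈ arcSet p q c := h.symm ▸ BTaux.mem_arcSet_top hp hc' t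
      exact le_antisymm h1.2 h2.2
    funext i
    have := key (i : ℤ)
    rwa [BTaux.extSeq_coe hp, BTaux.extSeq_coe hp] at this
  · intro S hS
    obtain ⟨c, hc, hceq⟩ := BTaux.exists_preimage hp hq hS
    exact ⟨c, hc, hceq⟩
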